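/- For every d ≥ 1/2 there is a constant C_d > 0 such that for all λ ≥ 0, w > 0 with λw ≤ 1, one has (λ + w + 1) · w^{d−1/2} · e^{-(λ+w)} ≤ C_d · e^{-(√λ − √w)²/2}. -/

import Mathlib

open Real

lemma pow_le_factorial_mul_exp {x : ℝ} (hx : 0 ≤ x) (n : ℕ) :
    x ^ n ≤ (n.factorial : ℝ) * Real.exp x := by
  have h := Real.sum_le_exp_of_nonneg hx (n + 1)
  have h1 : x ^ n / (n.factorial : ℝ) ≤ Real.exp x := by
    refine le_trans ?_ h
    exact Finset.single_le_sum (f := fun i => x ^ i / (i.factorial : ℝ))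
      (fun i _ => by positivity) (Finset.self_mem_range_succ n)
  have hn : (0:ℝ) < (n.factorial : ℝ) := by positivity
  calc x ^ n = (n.factorial : ℝ) * (x ^ n / (n.factorial : ℝ)) := by field_simp
    _ ≤ (n.factorial : ℝ) * Real.exp x := by nlinarith [Real.exp_pos x]

/-- For `d ≥ 1/2`: `(λ+w+1) w^(d-1/2) e^{-(λ+w)} ≤ C e^{-(√λ-√w)²/2}` on `λw ≤ 1`. -/
theorem stmt13 (d : ℝ) (hd : (1 : ℝ) / 2 ≤ d) :
    ∃ C : ℝ, 0 < C ∧ ∀ lam w : ℝ, 0 ≤ lam → 0 < w → lam * w ≤ 1 →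
      (lam + w + 1) * w ^ (d - 1 / 2) * Real.exp (-(lam + w)) ≤
        C * Real.exp (-(Real.sqrt lam - Real.sqrt w) ^ 2 / 2) := by
  set a : ℝ := d - 1 / 2 with ha
  have ha0 : 0 ≤ a := by rw [ha]; linarith
  set n : ℕ := ⌈a⌉₊ with hn
  refine ⟨4 * (1 + 4 ^ n * (n.factorial : ℝ)), by positivity, fun lam w hlam hw _ => ?_⟩
  -- step 1 : (√λ - √w)^2 ≤ λ + w
  have hsq : (Real.sqrt lam - Real.sqrt w) ^ 2 ≤ lam + w := by
    have h1 : Real.sqrt lam ^ 2 = lam := Real.sq_sqrt hlam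
    have h2 : Real.sqrt w ^ 2 = w := Real.sq_sqrt hw.le
    nlinarith [Real.sqrt_nonneg lam, Real.sqrt_nonneg w]
  -- step 2 : e^{-(λ+w)} ≤ e^{-(λ+w)/2} * e^{-(√λ-√w)²/2}
  have hexp : Real.exp (-(lam + w)) ≤
      Real.exp (-(lam + w) / 2) * Real.exp (-(Real.sqrt lam - Real.sqrt w) ^ 2 / 2) := by
    rw [← Real.exp_add]
    apply Real.exp_le_exp.2
    linarith
  -- bound 1 : (λ+w+1) * e^{-(λ+w)/4} ≤ 4
  have hb1 : (lam + w + 1) * Real.exp (-(lam + w) / 4) ≤ 4 := by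
    have h := Real.add_one_le_exp ((lam + w) / 4)
    have he : Real.exp (-(lam + w) / 4) = (Real.exp ((lam + w) / 4))⁻¹ := by
      rw [← Real.exp_neg]; ring_nf
    rw [he]
    rw [mul_inv_le_iff₀ (Real.exp_pos _)]
    nlinarith
  -- bound 2 : w^a * e^{-w/4} ≤ 1 + 4^n * n!
  have hb2 : w ^ a * Real.exp (-w / 4) ≤ 1 + 4 ^ n * (n.factorial : ℝ) := by
    have hwa : w ^ a ≤ 1 + w ^ n := by
      rcases le_total w 1 with h | h
      · have : w ^ a ≤ 1 := Real.rpow_le_one hw.le h ha0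
        have : (0:ℝ) ≤ w ^ n := by positivity
        linarith
      · have : w ^ a ≤ w ^ (n : ℝ) :=
          Real.rpow_le_rpow_of_exponent_le h (Nat.le_ceil a)
        rw [Real.rpow_natCast] at this
        linarith
    have hwn : w ^ n * Real.exp (-w / 4) ≤ 4 ^ n * (n.factorial : ℝ) := by
      have h := pow_le_factorial_mul_exp (x := w / 4) (by positivity) n
      have h4 : (w / 4) ^ n = w ^ n / 4 ^ n := div_pow w 4 n
      rw [h4] at h
      have he : Real.exp (-w / 4) = (Real.exp (w / 4))⁻¹ := by
        rw [← Real.exp_neg]; ring_nf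
      rw [he, mul_inv_le_iff₀ (Real.exp_pos _)]
      rw [mul_comm _ (Real.exp (w / 4))]
      have h4p : (0:ℝ) < 4 ^ n := by positivity
      calc w ^ n = 4 ^ n * (w ^ n / 4 ^ n) := by field_simp
        _ ≤ 4 ^ n * ((n.factorial : ℝ) * Real.exp (w / 4)) := by nlinarith
        _ = Real.exp (w / 4) * (4 ^ n * (n.factorial : ℝ)) := by ring
    have he1 : Real.exp (-w / 4) ≤ 1 := by
      apply Real.exp_le_one_iff.2; linarith
    have hp : (0:ℝ) ≤ w ^ n * Real.exp (-w / 4) := by positivity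
    calc w ^ a * Real.exp (-w / 4) ≤ (1 + w ^ n) * Real.exp (-w / 4) := by
          apply mul_le_mul_of_nonneg_right hwa (Real.exp_pos _).le
      _ = Real.exp (-w / 4) + w ^ n * Real.exp (-w / 4) := by ring
      _ ≤ 1 + 4 ^ n * (n.factorial : ℝ) := by linarith
  -- combine
  have key : (lam + w + 1) * w ^ a * Real.exp (-(lam + w) / 2) ≤ 4 * (1 + 4 ^ n * (n.factorial : ℝ)) := by
    have hsplit : Real.exp (-(lam + w) / 2) ≤
        Real.exp (-(lam + w) / 4) * Real.exp (-w / 4) := by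
      rw [← Real.exp_add]
      apply Real.exp_le_exp.2
      linarith
    have hpos1 : 0 ≤ (lam + w + 1) * w ^ a := by positivity
    calc (lam + w + 1) * w ^ a * Real.exp (-(lam + w) / 2)
        ≤ (lam + w + 1) * w ^ a * (Real.exp (-(lam + w) / 4) * Real.exp (-w / 4)) :=
          mul_le_mul_of_nonneg_left hsplit hpos1
      _ = ((lam + w + 1) * Real.exp (-(lam + w) / 4)) * (w ^ a * Real.exp (-w / 4)) := by ring
      _ ≤ 4 * (1 + 4 ^ n * (n.factorial : ℝ)) := by
          apply mul_le_mul hb1 hb2 (by positivity) (by norm_num)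
  calc (lam + w + 1) * w ^ a * Real.exp (-(lam + w))
      ≤ (lam + w + 1) * w ^ a *
        (Real.exp (-(lam + w) / 2) * Real.exp (-(Real.sqrt lam - Real.sqrt w) ^ 2 / 2)) := by
        apply mul_le_mul_of_nonneg_left hexp (by positivity)
    _ = ((lam + w + 1) * w ^ a * Real.exp (-(lam + w) / 2)) *
        Real.exp (-(Real.sqrt lam - Real.sqrt w) ^ 2 / 2) := by ring
    _ ≤ 4 * (1 + 4 ^ n * (n.factorial : ℝ)) * Real.exp (-(Real.sqrt lam - Real.sqrt w) ^ 2 / 2) := by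
        apply mul_le_mul_of_nonneg_right key (Real.exp_pos _).le
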